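/- Let k > 1. As λ → 0+, the Shannon entropy of the noncentral chi-squared distribution with k degrees of freedom and noncentrality parameter λ converges to the Shannon entropy of the central chi-squared distribution with k degrees of freedom; i.e., -∫_0^∞ f_{k,λ}(x) log f_{k,λ}(x) dx → -∫_0^∞ f_k(x) log f_k(x) dx. -/

import Mathlib

open Real MeasureTheory Set Filter

/-- Modified Bessel function of the first kind of order `ν`. -/
noncomputable def besselI (ν x : ℝ) : ℝ :=
  ∑' m : ℕ, (1 / ((m.factorial : ℝ) * Real.Gamma ((m : ℝ) + ν + 1))) *
    (x / 2) ^ (2 * (m : ℝ) + ν)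

/-- PDF of the noncentral chi-squared distribution with `k` degrees of freedom and
noncentrality parameter `lam`, for `x > 0`. -/
noncomputable def ncChiSqPDF (k lam x : ℝ) : ℝ :=
  (1 / 2) * Real.exp (-(x + lam) / 2) * (x / lam) ^ (k / 4 - 1 / 2) *
    besselI (k / 2 - 1) (Real.sqrt (lam * x))

/-- PDF of the central chi-squared distribution with `k` degrees of freedom, for `x > 0`. -/
noncomputable def chiSqPDF (k x : ℝ) : ℝ :=
  x ^ (k / 2 - 1) * Real.exp (-x / 2) / (2 ^ (k / 2) * Real.Gamma (k / 2))

namespace NCChiAux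

/-- The entire part of the Bessel series: `besselI ν (√t) = (√t/2)^ν * Sser ν t` for `t > 0`. -/
noncomputable def Sser (ν t : ℝ) : ℝ :=
  ∑' m : ℕ, (t / 4) ^ m / ((m.factorial : ℝ) * Real.Gamma ((m : ℝ) + ν + 1))

variable {ν : ℝ}

lemma gamma_arg_pos (hν : -(1/2 : ℝ) < ν) (m : ℕ) : (0:ℝ) < (m:ℝ) + ν + 1 := by
  have : (0:ℝ) ≤ (m:ℝ) := Nat.cast_nonneg m
  linarith

lemma gamma_pos (hν : -(1/2 : ℝ) < ν) (m : ℕ) : 0 < Real.Gamma ((m:ℝ) + ν + 1) :=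
  Real.Gamma_pos_of_pos (gamma_arg_pos hν m)

lemma gamma_nu_pos (hν : -(1/2 : ℝ) < ν) : 0 < Real.Gamma (ν + 1) :=
  Real.Gamma_pos_of_pos (by linarith)

lemma fact_le_gamma (hν : -(1/2 : ℝ) < ν) (m : ℕ) :
    (m.factorial : ℝ) / 2 ^ m * Real.Gamma (ν + 1) ≤ Real.Gamma ((m:ℝ) + ν + 1) := by
  induction m with
  | zero => simp
  | succ m ih =>
    have h1 : ((m:ℝ) + ν + 1) ≠ 0 := ne_of_gt (gamma_arg_pos hν m)
    have h2 : Real.Gamma (((m+1 : ℕ):ℝ) + ν + 1)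
        = ((m:ℝ) + ν + 1) * Real.Gamma ((m:ℝ) + ν + 1) := by
      push_cast
      rw [show (m:ℝ) + 1 + ν + 1 = ((m:ℝ) + ν + 1) + 1 by ring, Real.Gamma_add_one h1]
    rw [h2]
    have h3 : ((m+1 : ℕ).factorial : ℝ) / 2 ^ (m+1) * Real.Gamma (ν + 1)
        = (((m:ℝ)+1)/2) * ((m.factorial : ℝ) / 2 ^ m * Real.Gamma (ν + 1)) := by
      push_cast [Nat.factorial_succ]; ring
    rw [h3]
    have h4 : ((m:ℝ)+1)/2 ≤ (m:ℝ) + ν + 1 := by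
      have : (0:ℝ) ≤ (m:ℝ) := Nat.cast_nonneg m
      linarith
    have h5 : (0:ℝ) ≤ ((m:ℝ)+1)/2 := by positivity
    have hG : 0 < Real.Gamma ((m:ℝ) + ν + 1) := gamma_pos hν m
    calc (((m:ℝ)+1)/2) * ((m.factorial : ℝ) / 2 ^ m * Real.Gamma (ν + 1))
        ≤ (((m:ℝ)+1)/2) * Real.Gamma ((m:ℝ) + ν + 1) := mul_le_mul_of_nonneg_left ih h5
      _ ≤ ((m:ℝ) + ν + 1) * Real.Gamma ((m:ℝ) + ν + 1) :=
          mul_le_mul_of_nonneg_right h4 hG.le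

lemma term_le (hν : -(1/2:ℝ) < ν) {t : ℝ} (ht : 0 ≤ t) (m : ℕ) :
    (t/4)^m / ((m.factorial:ℝ) * Real.Gamma ((m:ℝ)+ν+1))
      ≤ (t/2)^m / (((m.factorial:ℝ) * m.factorial) * Real.Gamma (ν+1)) := by
  have hfac : (0:ℝ) < (m.factorial:ℝ) := by positivity
  have hG1 : 0 < Real.Gamma (ν+1) := gamma_nu_pos hν
  have hGm : 0 < Real.Gamma ((m:ℝ)+ν+1) := gamma_pos hν m
  have hd : ((m.factorial:ℝ) * m.factorial * Real.Gamma (ν+1)) / 2^m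
      ≤ (m.factorial:ℝ) * Real.Gamma ((m:ℝ)+ν+1) := by
    have h := mul_le_mul_of_nonneg_left (fact_le_gamma hν m) hfac.le
    calc ((m.factorial:ℝ) * m.factorial * Real.Gamma (ν+1)) / 2^m
        = (m.factorial:ℝ) * ((m.factorial:ℝ) / 2^m * Real.Gamma (ν+1)) := by ring
      _ ≤ (m.factorial:ℝ) * Real.Gamma ((m:ℝ)+ν+1) := h
  have hdpos : (0:ℝ) < ((m.factorial:ℝ) * m.factorial * Real.Gamma (ν+1)) / 2^m := by
    positivity
  calc (t/4)^m / ((m.factorial:ℝ) * Real.Gamma ((m:ℝ)+ν+1))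
      ≤ (t/4)^m / (((m.factorial:ℝ) * m.factorial * Real.Gamma (ν+1)) / 2^m) := by
        apply div_le_div_of_nonneg_left (by positivity) hdpos hd
    _ = (t/2)^m / (((m.factorial:ℝ) * m.factorial) * Real.Gamma (ν+1)) := by
        rw [div_div_eq_mul_div, ← mul_pow]
        have h42 : t / 4 * 2 = t / 2 := by ring
        rw [h42]

lemma summable_terms (hν : -(1/2:ℝ) < ν) (t : ℝ) :
    Summable (fun m : ℕ => (t/4)^m / ((m.factorial:ℝ) * Real.Gamma ((m:ℝ)+ν+1))) := by
  have hG1 : 0 < Real.Gamma (ν+1) := gamma_nu_pos hν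
  apply Summable.of_abs
  have hcomp : ∀ m : ℕ, |(t/4)^m / ((m.factorial:ℝ) * Real.Gamma ((m:ℝ)+ν+1))|
      ≤ (|t|/2)^m / (m.factorial:ℝ) * (1 / Real.Gamma (ν+1)) := by
    intro m
    have hfac : (0:ℝ) < (m.factorial:ℝ) := by positivity
    have hfac1 : (1:ℝ) ≤ (m.factorial:ℝ) := by
      have : 1 ≤ m.factorial := m.factorial_pos
      exact_mod_cast this
    have hGm : 0 < Real.Gamma ((m:ℝ)+ν+1) := gamma_pos hν m
    have habs : |(t/4)^m / ((m.factorial:ℝ) * Real.Gamma ((m:ℝ)+ν+1))|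
        = (|t|/4)^m / ((m.factorial:ℝ) * Real.Gamma ((m:ℝ)+ν+1)) := by
      rw [abs_div, abs_pow, abs_div, abs_of_pos (by positivity : (0:ℝ) < 4),
        abs_of_pos (by positivity : (0:ℝ) < (m.factorial:ℝ) * Real.Gamma ((m:ℝ)+ν+1))]
    rw [habs]
    calc (|t|/4)^m / ((m.factorial:ℝ) * Real.Gamma ((m:ℝ)+ν+1))
        ≤ (|t|/2)^m / (((m.factorial:ℝ) * m.factorial) * Real.Gamma (ν+1)) :=
          term_le hν (abs_nonneg t) m
      _ ≤ (|t|/2)^m / ((m.factorial:ℝ) * Real.Gamma (ν+1)) := by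
          refine div_le_div_of_nonneg_left (by positivity) (by positivity) ?_
          nlinarith [mul_le_mul_of_nonneg_right hfac1 (mul_nonneg hfac.le hG1.le)]
      _ = (|t|/2)^m / (m.factorial:ℝ) * (1 / Real.Gamma (ν+1)) := by
          ring
  refine Summable.of_nonneg_of_le (fun m => abs_nonneg _) hcomp ?_
  exact (Real.summable_pow_div_factorial (|t|/2)).mul_right _

lemma Sser_lower (hν : -(1/2:ℝ) < ν) {t : ℝ} (ht : 0 ≤ t) :
    1 / Real.Gamma (ν+1) ≤ Sser ν t := by
  have h0 : (t/4)^(0:ℕ) / (((0:ℕ).factorial:ℝ) * Real.Gamma (((0:ℕ):ℝ)+ν+1))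
      = 1 / Real.Gamma (ν+1) := by
    push_cast
    norm_num
  rw [← h0]
  refine Summable.le_tsum (summable_terms hν t) 0 fun m _ => ?_
  have hGm : 0 < Real.Gamma ((m:ℝ)+ν+1) := gamma_pos hν m
  have hfac : (0:ℝ) < (m.factorial:ℝ) := by positivity
  exact div_nonneg (pow_nonneg (by linarith) m) (mul_nonneg hfac.le hGm.le)

lemma Sser_upper (hν : -(1/2:ℝ) < ν) {t : ℝ} (ht : 0 ≤ t) :
    Sser ν t ≤ Real.exp (2 * Real.sqrt t) / Real.Gamma (ν+1) := by
  have hG1 : 0 < Real.Gamma (ν+1) := gamma_nu_pos hν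
  set u := Real.sqrt (t/2) with hu_def
  have hu : 0 ≤ u := Real.sqrt_nonneg _
  have hexp : Real.exp u = ∑' m : ℕ, u ^ m / (m.factorial : ℝ) := by
    rw [Real.exp_eq_exp_ℝ, NormedSpace.exp_eq_tsum_div]
  have hsum : Summable (fun m : ℕ => u ^ m / (m.factorial : ℝ)) :=
    Real.summable_pow_div_factorial u
  have hb : ∀ m : ℕ, u ^ m / (m.factorial:ℝ) ≤ Real.exp u := fun m =>
    (Summable.le_tsum hsum m fun j _ => by positivity).trans_eq hexp.symm
  have husq : u * u = t / 2 := Real.mul_self_sqrt (by linarith)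
  have key : ∀ m : ℕ, (t/4)^m / ((m.factorial:ℝ) * Real.Gamma ((m:ℝ)+ν+1))
      ≤ (u^m / (m.factorial:ℝ)) * (Real.exp u / Real.Gamma (ν+1)) := by
    intro m
    have hfac : (0:ℝ) < (m.factorial:ℝ) := by positivity
    have e1 : (t/2)^m / (((m.factorial:ℝ) * m.factorial) * Real.Gamma (ν+1))
        = (u^m / (m.factorial:ℝ)) * ((u^m / (m.factorial:ℝ)) / Real.Gamma (ν+1)) := by
      rw [← husq, mul_pow]
      ring
    calc (t/4)^m / ((m.factorial:ℝ) * Real.Gamma ((m:ℝ)+ν+1))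
        ≤ (t/2)^m / (((m.factorial:ℝ) * m.factorial) * Real.Gamma (ν+1)) :=
          term_le hν ht m
      _ = (u^m / (m.factorial:ℝ)) * ((u^m / (m.factorial:ℝ)) / Real.Gamma (ν+1)) := e1
      _ ≤ (u^m / (m.factorial:ℝ)) * (Real.exp u / Real.Gamma (ν+1)) := by
          refine mul_le_mul_of_nonneg_left ?_ (by positivity)
          exact div_le_div_of_nonneg_right (hb m) hG1.le
  calc Sser ν t
      ≤ ∑' m : ℕ, (u^m / (m.factorial:ℝ)) * (Real.exp u / Real.Gamma (ν+1)) :=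
        Summable.tsum_le_tsum key (summable_terms hν t) (hsum.mul_right _)
    _ = Real.exp u * (Real.exp u / Real.Gamma (ν+1)) := by
        rw [tsum_mul_right, ← hexp]
    _ = Real.exp (u + u) / Real.Gamma (ν+1) := by
        rw [Real.exp_add]; ring
    _ ≤ Real.exp (2 * Real.sqrt t) / Real.Gamma (ν+1) := by
        gcongr
        have : u ≤ Real.sqrt t := Real.sqrt_le_sqrt (by linarith)
        linarith

lemma Sser_pos (hν : -(1/2:ℝ) < ν) {t : ℝ} (ht : 0 ≤ t) : 0 < Sser ν t :=
  lt_of_lt_of_le (one_div_pos.2 (gamma_nu_pos hν)) (Sser_lower hν ht)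

lemma Sser_tendsto (hν : -(1/2:ℝ) < ν) :
    Tendsto (fun t => Sser ν t) (nhdsWithin 0 (Ioi (0:ℝ)))
      (nhds (1 / Real.Gamma (ν+1))) := by
  have hG1 : 0 < Real.Gamma (ν+1) := gamma_nu_pos hν
  have hc : Continuous fun t : ℝ => Real.exp (2 * Real.sqrt t) / Real.Gamma (ν+1) := by
    fun_prop
  have h0 := hc.tendsto 0
  have h0' : Tendsto (fun t : ℝ => Real.exp (2 * Real.sqrt t) / Real.Gamma (ν+1))
      (nhdsWithin 0 (Ioi (0:ℝ))) (nhds (1 / Real.Gamma (ν+1))) := by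
    have : Real.exp (2 * Real.sqrt (0:ℝ)) / Real.Gamma (ν+1) = 1 / Real.Gamma (ν+1) := by
      simp
    rw [← this]
    exact h0.mono_left nhdsWithin_le_nhds
  refine tendsto_of_tendsto_of_tendsto_of_le_of_le' tendsto_const_nhds h0' ?_ ?_
  · filter_upwards [self_mem_nhdsWithin] with t ht
    exact Sser_lower hν (le_of_lt ht)
  · filter_upwards [self_mem_nhdsWithin] with t ht
    exact Sser_upper hν (le_of_lt ht)

lemma measurable_Sser (hν : -(1/2:ℝ) < ν) : Measurable (Sser ν) := by
  apply measurable_of_tendsto_metrizable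
    (f := fun n t => ∑ m ∈ Finset.range n,
      (t/4)^m / ((m.factorial:ℝ) * Real.Gamma ((m:ℝ)+ν+1)))
  · intro n
    apply Finset.measurable_sum
    intro m _
    exact ((measurable_id.div_const 4).pow_const m).div_const _
  · rw [tendsto_pi_nhds]
    intro t
    exact (summable_terms hν t).hasSum.tendsto_sum_nat

/-- The key algebraic identity for the noncentral chi-squared pdf. -/
lemma nc_eq (k : ℝ) {lam x : ℝ} (hlam : 0 < lam) (hx : 0 < x) :
    ncChiSqPDF k lam x
      = (1/2) * Real.exp (-(x+lam)/2) * (x/2) ^ (k/2-1) * Sser (k/2-1) (lam*x) := by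
  set ν := k/2 - 1 with hν_def
  have hlx : 0 < lam * x := mul_pos hlam hx
  have hs : 0 < Real.sqrt (lam * x) := Real.sqrt_pos.2 hlx
  have hz : 0 < Real.sqrt (lam * x) / 2 := by positivity
  have hbessel : besselI ν (Real.sqrt (lam * x))
      = Sser ν (lam * x) * (Real.sqrt (lam*x) / 2) ^ ν := by
    rw [besselI, Sser, ← tsum_mul_right]
    apply tsum_congr
    intro m
    have h1 : (Real.sqrt (lam*x) / 2) ^ (2 * (m:ℝ) + ν)
        = (Real.sqrt (lam*x) / 2) ^ (2 * (m:ℝ)) * (Real.sqrt (lam*x) / 2) ^ ν :=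
      Real.rpow_add hz _ _
    have h2 : (Real.sqrt (lam*x) / 2) ^ (2 * (m:ℝ))
        = (lam * x / 4) ^ m := by
      rw [show (2 * (m:ℝ)) = ((2*m : ℕ) : ℝ) by push_cast; ring, Real.rpow_natCast,
        pow_mul]
      congr 1
      rw [div_pow, Real.sq_sqrt hlx.le]
      norm_num
    rw [h1, h2]
    field_simp
  rw [ncChiSqPDF, hbessel]
  have hexp : (x / lam) ^ (k/4 - 1/2) = (x / lam) ^ (ν/2) := by
    congr 1
    rw [hν_def]; ring
  rw [hexp]
  have hkey : (x / lam) ^ (ν/2) * (Real.sqrt (lam*x) / 2) ^ ν = (x/2) ^ ν := by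
    have h3 : (Real.sqrt (lam*x) / 2) ^ ν = (lam*x) ^ (ν/2) / 2 ^ ν := by
      rw [Real.div_rpow (Real.sqrt_nonneg _) (by norm_num : (0:ℝ) ≤ 2)]
      congr 1
      rw [Real.sqrt_eq_rpow, ← Real.rpow_mul hlx.le]
      congr 1
      ring
    rw [h3]
    have h4 : (x / lam) ^ (ν/2) * (lam*x) ^ (ν/2) = x ^ ν := by
      rw [← Real.mul_rpow (by positivity) hlx.le,
        show x / lam * (lam * x) = x ^ (2:ℕ) by field_simp]
      rw [← Real.rpow_natCast x 2, ← Real.rpow_mul hx.le]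
      congr 1
      push_cast
      ring
    calc (x / lam) ^ (ν/2) * ((lam*x) ^ (ν/2) / 2 ^ ν)
        = ((x / lam) ^ (ν/2) * (lam*x) ^ (ν/2)) / 2 ^ ν := by ring
      _ = x ^ ν / 2 ^ ν := by rw [h4]
      _ = (x/2) ^ ν := (Real.div_rpow hx.le (by norm_num : (0:ℝ) ≤ 2) ν).symm
  calc (1/2) * Real.exp (-(x+lam)/2) * (x/lam) ^ (ν/2)
        * (Sser ν (lam*x) * (Real.sqrt (lam*x) / 2) ^ ν)
      = (1/2) * Real.exp (-(x+lam)/2)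
        * ((x/lam) ^ (ν/2) * (Real.sqrt (lam*x) / 2) ^ ν) * Sser ν (lam*x) := by ring
    _ = (1/2) * Real.exp (-(x+lam)/2) * (x/2) ^ ν * Sser ν (lam*x) := by rw [hkey]

/-- The central chi-squared pdf in the analogous form. -/
lemma chiSq_eq (k : ℝ) (hk : 1 < k) {x : ℝ} (hx : 0 < x) :
    chiSqPDF k x
      = (1/2) * Real.exp (-x/2) * (x/2) ^ (k/2-1) * (1 / Real.Gamma (k/2-1+1)) := by
  have hk2 : k/2 - 1 + 1 = k/2 := by ring
  rw [chiSqPDF, hk2]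
  have h2 : (2:ℝ) ^ (k/2) = 2 * 2 ^ (k/2 - 1) := by
    calc (2:ℝ) ^ (k/2) = 2 ^ ((1:ℝ) + (k/2 - 1)) := by congr 1; ring
      _ = 2 ^ (1:ℝ) * 2 ^ (k/2 - 1) := Real.rpow_add (by norm_num) 1 _
      _ = 2 * 2 ^ (k/2 - 1) := by rw [Real.rpow_one]
  have hdiv : (x/2) ^ (k/2-1) = x ^ (k/2-1) / 2 ^ (k/2-1) :=
    Real.div_rpow hx.le (by norm_num : (0:ℝ) ≤ 2) _
  have hG : 0 < Real.Gamma (k/2) := Real.Gamma_pos_of_pos (by linarith)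
  have h2pos : (0:ℝ) < 2 ^ (k/2-1) := Real.rpow_pos_of_pos (by norm_num) _
  rw [h2, hdiv]
  field_simp


lemma abs_log_le {x : ℝ} (hx : 0 < x) :
    |Real.log x| ≤ 4*(x^(-(1/4):ℝ) + x^((1/4):ℝ)) := by
  have hp : (0:ℝ) < x ^ ((1/4):ℝ) := Real.rpow_pos_of_pos hx _
  have hq : (0:ℝ) < x ^ (-(1/4):ℝ) := Real.rpow_pos_of_pos hx _
  have h1 : Real.log (x ^ ((1/4):ℝ)) ≤ x ^ ((1/4):ℝ) - 1 := Real.log_le_sub_one_of_pos hp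
  rw [Real.log_rpow hx] at h1
  have h2 : Real.log ((x⁻¹) ^ ((1/4):ℝ)) ≤ (x⁻¹) ^ ((1/4):ℝ) - 1 :=
    Real.log_le_sub_one_of_pos (Real.rpow_pos_of_pos (inv_pos.2 hx) _)
  rw [Real.log_rpow (inv_pos.2 hx), Real.log_inv] at h2
  have h3 : (x⁻¹) ^ ((1/4):ℝ) = x ^ (-(1/4):ℝ) := by
    rw [Real.inv_rpow hx.le, ← Real.rpow_neg hx.le]
  rw [h3] at h2
  rw [abs_le]
  constructor <;> nlinarith

lemma intOn_rpow_exp {s : ℝ} (hs : -1 < s) :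
    IntegrableOn (fun x : ℝ => x ^ s * Real.exp (-(x/4))) (Ioi 0) := by
  have h := integrableOn_rpow_mul_exp_neg_mul_rpow hs one_pos (by norm_num : (0:ℝ) < 1/4)
  refine h.congr_fun (fun x hx => ?_) measurableSet_Ioi
  simp only [Real.rpow_one]
  ring_nf

/-- Dominating function for the entropy integrand. -/
noncomputable def boundFn (k : ℝ) (x : ℝ) : ℝ :=
  (1/2) * Real.exp (-x/2) * (x/2) ^ (k/2-1) *
      (Real.exp (2*Real.sqrt x) / Real.Gamma (k/2-1+1)) *
    (Real.log 2 + (x+1)/2 + |k/2-1| * |Real.log (x/2)| +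
      |Real.log (Real.Gamma (k/2-1+1))| + 2*Real.sqrt x)

lemma key_bound (k : ℝ) (hk : 1 < k) {lam x : ℝ} (hlam : 0 < lam) (hlam1 : lam ≤ 1)
    (hx : 0 < x) :
    |ncChiSqPDF k lam x * Real.log (ncChiSqPDF k lam x)| ≤ boundFn k x := by
  have hν : -(1/2:ℝ) < k/2 - 1 := by linarith
  have hΓ : 0 < Real.Gamma (k/2-1+1) := gamma_nu_pos hν
  have hlx : 0 < lam * x := mul_pos hlam hx
  have hx2 : 0 < x/2 := by linarith
  rw [nc_eq k hlam hx]
  set ν := k/2 - 1 with hν_def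
  set S := Sser ν (lam*x) with hS_def
  have hS0 : 0 < S := Sser_pos hν hlx.le
  have hP0 : 0 < (x/2) ^ ν := Real.rpow_pos_of_pos hx2 ν
  have hE0 : 0 < Real.exp (-(x+lam)/2) := Real.exp_pos _
  have hsx : 0 ≤ Real.sqrt x := Real.sqrt_nonneg x
  have hf0 : 0 < (1/2) * Real.exp (-(x+lam)/2) * (x/2) ^ ν * S :=
    mul_pos (mul_pos (mul_pos one_half_pos hE0) hP0) hS0
  have hSle : S ≤ Real.exp (2*Real.sqrt x) / Real.Gamma (ν+1) := by
    refine (Sser_upper hν hlx.le).trans ?_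
    refine div_le_div_of_nonneg_right ?_ hΓ.le
    refine Real.exp_le_exp.2 ?_
    have h := Real.sqrt_le_sqrt (show lam * x ≤ x by nlinarith)
    linarith
  have hSge : 1/Real.Gamma (ν+1) ≤ S := Sser_lower hν hlx.le
  have hfle : (1/2) * Real.exp (-(x+lam)/2) * (x/2) ^ ν * S
      ≤ (1/2) * Real.exp (-x/2) * (x/2) ^ ν *
        (Real.exp (2*Real.sqrt x) / Real.Gamma (ν+1)) := by
    have hEle : Real.exp (-(x+lam)/2) ≤ Real.exp (-x/2) :=
      Real.exp_le_exp.2 (by linarith)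
    have step1 : (1/2) * Real.exp (-(x+lam)/2) * (x/2) ^ ν * S
        ≤ (1/2) * Real.exp (-x/2) * (x/2) ^ ν * S :=
      mul_le_mul_of_nonneg_right (mul_le_mul_of_nonneg_right
        (mul_le_mul_of_nonneg_left hEle (by norm_num : (0:ℝ) ≤ 1/2)) hP0.le) hS0.le
    refine step1.trans (mul_le_mul_of_nonneg_left hSle ?_)
    exact mul_nonneg (mul_nonneg (by norm_num) (Real.exp_pos _).le) hP0.le
  have hlogf : Real.log ((1/2) * Real.exp (-(x+lam)/2) * (x/2) ^ ν * S)
      = -Real.log 2 + (-(x+lam)/2) + ν * Real.log (x/2) + Real.log S := by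
    rw [Real.log_mul (mul_pos (mul_pos one_half_pos hE0) hP0).ne' hS0.ne',
      Real.log_mul (mul_pos one_half_pos hE0).ne' hP0.ne',
      Real.log_mul (by norm_num : (1/2:ℝ) ≠ 0) hE0.ne',
      Real.log_exp, Real.log_rpow hx2,
      show Real.log (1/2) = -Real.log 2 by rw [one_div, Real.log_inv]]
  have hlogS : |Real.log S| ≤ |Real.log (Real.Gamma (ν+1))| + 2*Real.sqrt x := by
    have h1 : -Real.log (Real.Gamma (ν+1)) ≤ Real.log S := by
      have := Real.log_le_log (one_div_pos.2 hΓ) hSge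
      rwa [one_div, Real.log_inv] at this
    have h2 : Real.log S ≤ 2*Real.sqrt x - Real.log (Real.Gamma (ν+1)) := by
      have := Real.log_le_log hS0 hSle
      rwa [Real.log_div (Real.exp_ne_zero _) hΓ.ne', Real.log_exp] at this
    rw [abs_le]
    constructor
    · have := le_abs_self (Real.log (Real.Gamma (ν+1))); linarith
    · have := neg_le_abs (Real.log (Real.Gamma (ν+1))); linarith
  have habs : |Real.log ((1/2) * Real.exp (-(x+lam)/2) * (x/2) ^ ν * S)|
      ≤ Real.log 2 + (x+1)/2 + |ν| * |Real.log (x/2)| +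
        |Real.log (Real.Gamma (ν+1))| + 2*Real.sqrt x := by
    rw [hlogf]
    have t1 : |(-Real.log 2) + (-(x+lam)/2) + ν * Real.log (x/2) + Real.log S|
        ≤ |(-Real.log 2)| + |(-(x+lam)/2)| + |ν * Real.log (x/2)| + |Real.log S| :=
      calc |(-Real.log 2) + (-(x+lam)/2) + ν * Real.log (x/2) + Real.log S|
          ≤ |(-Real.log 2) + (-(x+lam)/2) + ν * Real.log (x/2)| + |Real.log S| :=
            abs_add_le _ _
        _ ≤ (|(-Real.log 2) + (-(x+lam)/2)| + |ν * Real.log (x/2)|) + |Real.log S| :=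
            add_le_add_left (abs_add_le _ _) _
        _ ≤ ((|(-Real.log 2)| + |(-(x+lam)/2)|) + |ν * Real.log (x/2)|) + |Real.log S| :=
            add_le_add_left (add_le_add_left (abs_add_le _ _) _) _
    have e1 : |(-Real.log 2)| = Real.log 2 := by
      rw [abs_neg, abs_of_nonneg (Real.log_nonneg one_le_two)]
    have e2 : |(-(x+lam)/2)| ≤ (x+1)/2 := by
      rw [abs_div, abs_of_nonneg (by norm_num : (0:ℝ) ≤ 2), abs_neg,
        abs_of_nonneg (by linarith : (0:ℝ) ≤ x + lam)]
      linarith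
    have e3 : |ν * Real.log (x/2)| = |ν| * |Real.log (x/2)| := abs_mul _ _
    rw [e1, e3] at t1
    linarith [t1, e2, hlogS]
  rw [abs_mul, abs_of_pos hf0]
  have hfinal := mul_le_mul hfle habs (abs_nonneg _)
    (mul_nonneg (mul_nonneg (mul_nonneg (by norm_num) (Real.exp_pos _).le) hP0.le)
      (div_nonneg (Real.exp_pos _).le hΓ.le))
  simp only [boundFn]
  rw [← hν_def]
  exact hfinal

lemma measurable_boundFn (k : ℝ) : Measurable (boundFn k) := by
  have msqrt : Measurable fun x : ℝ => Real.sqrt x := Real.continuous_sqrt.measurable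
  have m1 : Measurable fun x : ℝ => (1/2) * Real.exp (-x/2) * (x/2) ^ (k/2-1) *
      (Real.exp (2*Real.sqrt x) / Real.Gamma (k/2-1+1)) :=
    ((measurable_const.mul (Real.measurable_exp.comp (measurable_id.neg.div_const 2))).mul
      ((measurable_id.div_const 2).pow_const _)).mul
      ((Real.measurable_exp.comp (msqrt.const_mul 2)).div_const _)
  have m2 : Measurable fun x : ℝ => Real.log 2 + (x+1)/2 +
      |k/2-1| * |Real.log (x/2)| + |Real.log (Real.Gamma (k/2-1+1))| + 2*Real.sqrt x :=
    ((((measurable_const.add ((measurable_id.add_const 1).div_const 2)).add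
      (((Real.measurable_log.comp (measurable_id.div_const 2)).abs).const_mul _)).add
      measurable_const).add (msqrt.const_mul 2))
  exact m1.mul m2

set_option maxHeartbeats 1600000 in
lemma integrableOn_boundFn (k : ℝ) (hk : 1 < k) :
    IntegrableOn (boundFn k) (Ioi 0) := by
  have hν : -(1/2:ℝ) < k/2-1 := by linarith
  have hΓ : 0 < Real.Gamma (k/2-1+1) := gamma_nu_pos hν
  set ν := k/2-1 with hν_def
  obtain ⟨M, hM_def⟩ : ∃ M : ℝ, M = Real.log 2 + |Real.log (Real.Gamma (ν+1))| + 3/2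
      + |ν| * Real.log 2 + 4 * |ν| := ⟨_, rfl⟩
  obtain ⟨K, hK_def⟩ : ∃ K : ℝ, K = (1/2) * (2:ℝ)^(-ν) / Real.Gamma (ν+1) * Real.exp 4 :=
    ⟨_, rfl⟩
  have hlog2 : (0:ℝ) ≤ Real.log 2 := Real.log_nonneg one_le_two
  have haΓ : (0:ℝ) ≤ |Real.log (Real.Gamma (ν+1))| := abs_nonneg _
  have haν : (0:ℝ) ≤ |ν| := abs_nonneg _
  have hνlog2 : (0:ℝ) ≤ |ν| * Real.log 2 := mul_nonneg haν hlog2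
  have hM0 : 0 ≤ M := by rw [hM_def]; linarith
  have hK0 : 0 < K := by
    rw [hK_def]
    exact mul_pos (div_pos (mul_pos one_half_pos (Real.rpow_pos_of_pos two_pos _)) hΓ)
      (Real.exp_pos 4)
  have hsν : (-1:ℝ) < ν := by rw [hν_def]; linarith
  have hsν1 : (-1:ℝ) < ν + 1 := by linarith
  have hsν2 : (-1:ℝ) < ν - 1/4 := by linarith
  have hsν3 : (-1:ℝ) < ν + 1/4 := by linarith
  have hgint : IntegrableOn (fun x : ℝ =>
      K*M*(x^ν*Real.exp (-(x/4))) + K*M*(x^(ν+1)*Real.exp (-(x/4)))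
        + K*M*(x^(ν-1/4)*Real.exp (-(x/4))) + K*M*(x^(ν+1/4)*Real.exp (-(x/4))))
      (Ioi 0) := by
    exact ((((intOn_rpow_exp hsν).const_mul (K*M)).add
      ((intOn_rpow_exp hsν1).const_mul (K*M))).add
      ((intOn_rpow_exp hsν2).const_mul (K*M))).add
      ((intOn_rpow_exp hsν3).const_mul (K*M))
  refine hgint.mono' (measurable_boundFn k).aestronglyMeasurable ?_
  rw [ae_restrict_iff' measurableSet_Ioi]
  refine ae_of_all _ fun x hx => ?_
  have hx0 : 0 < x := hx
  have hx2 : 0 < x/2 := by linarith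
  have hP0 : 0 < (x/2) ^ ν := Real.rpow_pos_of_pos hx2 ν
  have hsx : 0 ≤ Real.sqrt x := Real.sqrt_nonneg x
  have hxq : Real.sqrt x * Real.sqrt x = x := Real.mul_self_sqrt hx0.le
  have hup : (0:ℝ) < x ^ ((1/4):ℝ) := Real.rpow_pos_of_pos hx0 _
  have hun : (0:ℝ) < x ^ (-(1/4):ℝ) := Real.rpow_pos_of_pos hx0 _
  obtain ⟨u, hu_def⟩ : ∃ u : ℝ, u = x ^ (-(1/4):ℝ) + x ^ ((1/4):ℝ) := ⟨_, rfl⟩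
  have hu0 : 0 ≤ u := by rw [hu_def]; positivity
  -- nonnegativity of boundFn
  have hL0 : 0 ≤ Real.log 2 + (x+1)/2 + |ν| * |Real.log (x/2)| +
      |Real.log (Real.Gamma (ν+1))| + 2*Real.sqrt x := by
    have := mul_nonneg haν (abs_nonneg (Real.log (x/2)))
    linarith
  have hPre0 : 0 ≤ (1/2) * Real.exp (-x/2) * (x/2) ^ ν *
      (Real.exp (2*Real.sqrt x) / Real.Gamma (ν+1)) :=
    mul_nonneg (mul_nonneg (mul_nonneg (by norm_num) (Real.exp_pos _).le) hP0.le)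
      (div_nonneg (Real.exp_pos _).le hΓ.le)
  have hbnn : 0 ≤ boundFn k x := by
    simp only [boundFn]
    rw [← hν_def]
    exact mul_nonneg hPre0 hL0
  rw [Real.norm_eq_abs, abs_of_nonneg hbnn]
  -- bound the prefix
  have hsplit : (x/2) ^ ν = x ^ ν * (2:ℝ)^(-ν) := by
    rw [Real.div_rpow hx0.le (by norm_num : (0:ℝ) ≤ 2),
      Real.rpow_neg (by norm_num : (0:ℝ) ≤ 2), div_eq_mul_inv]
  have h2s : Real.exp (2*Real.sqrt x) ≤ Real.exp 4 * Real.exp (x/4) := by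
    rw [← Real.exp_add]
    refine Real.exp_le_exp.2 ?_
    nlinarith [sq_nonneg (Real.sqrt x - 4)]
  have hPre : (1/2) * Real.exp (-x/2) * (x/2) ^ ν *
      (Real.exp (2*Real.sqrt x) / Real.Gamma (ν+1))
      ≤ K * (x ^ ν * Real.exp (-(x/4))) := by
    have hc0 : (0:ℝ) ≤ (1/2) * (2:ℝ)^(-ν) / Real.Gamma (ν+1) :=
      (div_pos (mul_pos one_half_pos (Real.rpow_pos_of_pos two_pos _)) hΓ).le
    calc (1/2) * Real.exp (-x/2) * (x/2) ^ ν *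
        (Real.exp (2*Real.sqrt x) / Real.Gamma (ν+1))
        = ((1/2) * (2:ℝ)^(-ν) / Real.Gamma (ν+1)) *
          (x ^ ν * (Real.exp (-x/2) * Real.exp (2*Real.sqrt x))) := by
          rw [hsplit]; ring
      _ ≤ ((1/2) * (2:ℝ)^(-ν) / Real.Gamma (ν+1)) *
          (x ^ ν * (Real.exp (-x/2) * (Real.exp 4 * Real.exp (x/4)))) := by
          refine mul_le_mul_of_nonneg_left ?_ hc0
          refine mul_le_mul_of_nonneg_left ?_ (Real.rpow_nonneg hx0.le ν)
          exact mul_le_mul_of_nonneg_left h2s (Real.exp_pos _).le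
      _ = K * (x ^ ν * Real.exp (-(x/4))) := by
          rw [hK_def]
          have : Real.exp (-x/2) * (Real.exp 4 * Real.exp (x/4))
              = Real.exp 4 * Real.exp (-(x/4)) := by
            rw [← Real.exp_add, ← Real.exp_add, ← Real.exp_add]
            congr 1
            ring
          rw [this]
          ring
  -- bound the log factor
  have hlogx2 : |Real.log (x/2)| ≤ |Real.log x| + Real.log 2 := by
    rw [Real.log_div hx0.ne' (by norm_num : (2:ℝ) ≠ 0), sub_eq_add_neg]
    refine (abs_add_le _ _).trans ?_
    rw [abs_neg, abs_of_nonneg hlog2]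
  have hlogx : |Real.log x| ≤ 4*u := by
    rw [hu_def]; exact abs_log_le hx0
  have h2sx : 2*Real.sqrt x ≤ x + 1 := by
    nlinarith [sq_nonneg (Real.sqrt x - 1)]
  have hmulν : |ν| * |Real.log (x/2)| ≤ (4 * |ν|)*u + |ν| * Real.log 2 := by
    have := mul_le_mul_of_nonneg_left
      (hlogx2.trans (add_le_add_left hlogx _)) haν
    calc |ν| * |Real.log (x/2)| ≤ |ν| * (4*u + Real.log 2) := this
      _ = (4 * |ν|)*u + |ν| * Real.log 2 := by ring
  have hLle : Real.log 2 + (x+1)/2 + |ν| * |Real.log (x/2)| +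
      |Real.log (Real.Gamma (ν+1))| + 2*Real.sqrt x
      ≤ M + M*x + M*u := by
    have hMx : (3/2)*x ≤ M*x := by
      refine mul_le_mul_of_nonneg_right ?_ hx0.le
      rw [hM_def]; linarith
    have hMu : (4 * |ν|)*u ≤ M*u := by
      refine mul_le_mul_of_nonneg_right ?_ hu0
      rw [hM_def]; linarith
    have hMc : Real.log 2 + |Real.log (Real.Gamma (ν+1))| + 3/2 + |ν| * Real.log 2 ≤ M := by
      rw [hM_def]; linarith
    linarith [hmulν, h2sx]
  -- combine
  have hcomb : boundFn k x ≤ (K * (x ^ ν * Real.exp (-(x/4)))) * (M + M*x + M*u) := by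
    simp only [boundFn]
    rw [← hν_def]
    exact mul_le_mul hPre hLle hL0
      (mul_nonneg hK0.le (mul_nonneg (Real.rpow_nonneg hx0.le ν) (Real.exp_pos _).le))
  refine hcomb.trans (le_of_eq ?_)
  have hx1 : x^(ν+1) = x^ν * x := Real.rpow_add_one hx0.ne' ν
  have hx2e : x^(ν-1/4) = x^ν * x^(-(1/4):ℝ) := by
    rw [show ν-1/4 = ν + -(1/4) by ring, Real.rpow_add hx0]
  have hx3e : x^(ν+1/4) = x^ν * x^((1/4):ℝ) := by
    rw [show ν+1/4 = ν + (1/4) by ring, Real.rpow_add hx0]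
  rw [hx1, hx2e, hx3e, hu_def]
  ring

end NCChiAux


theorem tendsto_shannonEntropy_ncChiSq (k : ℝ) (hk : 1 < k) :
    Tendsto
      (fun lam => -∫ x in Ioi (0 : ℝ), ncChiSqPDF k lam x * Real.log (ncChiSqPDF k lam x))
      (nhdsWithin 0 (Ioi (0 : ℝ)))
      (nhds (-∫ x in Ioi (0 : ℝ), chiSqPDF k x * Real.log (chiSqPDF k x))) := by
  have hν : -(1/2:ℝ) < k/2 - 1 := by linarith
  have hΓ : 0 < Real.Gamma (k/2-1+1) := NCChiAux.gamma_nu_pos hν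
  apply Filter.Tendsto.neg
  refine MeasureTheory.tendsto_integral_filter_of_dominated_convergence
    (NCChiAux.boundFn k) ?_ ?_ ?_ ?_
  · filter_upwards [self_mem_nhdsWithin] with lam hlam
    have hlam0 : 0 < lam := hlam
    have hm : Measurable fun x : ℝ =>
        (1/2) * Real.exp (-(x+lam)/2) * (x/2)^(k/2-1) * NCChiAux.Sser (k/2-1) (lam*x) :=
      (((measurable_const.mul (Real.measurable_exp.comp
          ((measurable_id.add_const lam).neg.div_const 2))).mul
        ((measurable_id.div_const 2).pow_const _)).mul
        ((NCChiAux.measurable_Sser hν).comp (measurable_id.const_mul lam)))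
    refine ((hm.mul hm.log).aestronglyMeasurable).congr ?_
    rw [Filter.EventuallyEq, ae_restrict_iff' measurableSet_Ioi]
    refine ae_of_all _ fun x hx => ?_
    rw [NCChiAux.nc_eq k hlam0 hx]
    rfl
  · filter_upwards [Ioc_mem_nhdsGT zero_lt_one] with lam hlam
    rw [ae_restrict_iff' measurableSet_Ioi]
    refine ae_of_all _ fun x hx => ?_
    rw [Real.norm_eq_abs]
    exact NCChiAux.key_bound k hk hlam.1 hlam.2 hx
  · exact NCChiAux.integrableOn_boundFn k hk
  · rw [ae_restrict_iff' measurableSet_Ioi]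
    refine ae_of_all _ fun x hx => ?_
    have hx0 : 0 < x := hx
    have hmul : Tendsto (fun lam : ℝ => lam * x) (nhdsWithin 0 (Ioi 0))
        (nhdsWithin 0 (Ioi 0)) := by
      apply tendsto_nhdsWithin_of_tendsto_nhds_of_eventually_within
      · have h : Tendsto (fun lam : ℝ => lam * x) (nhds (0:ℝ)) (nhds (0*x)) :=
          tendsto_id.mul_const x
        rw [zero_mul] at h
        exact h.mono_left nhdsWithin_le_nhds
      · filter_upwards [self_mem_nhdsWithin] with lam hlam
        exact mul_pos hlam hx0
    have hS : Tendsto (fun lam : ℝ => NCChiAux.Sser (k/2-1) (lam*x))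
        (nhdsWithin 0 (Ioi 0)) (nhds (1 / Real.Gamma (k/2-1+1))) :=
      (NCChiAux.Sser_tendsto hν).comp hmul
    have hE : Tendsto (fun lam : ℝ => Real.exp (-(x+lam)/2)) (nhdsWithin 0 (Ioi 0))
        (nhds (Real.exp (-x/2))) := by
      have hc : Continuous fun lam : ℝ => Real.exp (-(x+lam)/2) :=
        Real.continuous_exp.comp (((continuous_const.add continuous_id).neg).div_const 2)
      have h := (hc.tendsto 0).mono_left
        (nhdsWithin_le_nhds : nhdsWithin (0:ℝ) (Ioi 0) ≤ nhds 0)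
      simpa using h
    have hlim0 : Tendsto (fun lam : ℝ =>
        (1/2) * Real.exp (-(x+lam)/2) * (x/2)^(k/2-1) * NCChiAux.Sser (k/2-1) (lam*x))
        (nhdsWithin 0 (Ioi 0))
        (nhds ((1/2) * Real.exp (-x/2) * (x/2)^(k/2-1) * (1 / Real.Gamma (k/2-1+1)))) :=
      ((tendsto_const_nhds.mul hE).mul tendsto_const_nhds).mul hS
    have heq : (fun lam : ℝ =>
        (1/2) * Real.exp (-(x+lam)/2) * (x/2)^(k/2-1) * NCChiAux.Sser (k/2-1) (lam*x))
        =ᶠ[nhdsWithin 0 (Ioi (0:ℝ))] fun lam => ncChiSqPDF k lam x := by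
      filter_upwards [self_mem_nhdsWithin] with lam hlam
      exact (NCChiAux.nc_eq k hlam hx0).symm
    have hf : Tendsto (fun lam : ℝ => ncChiSqPDF k lam x) (nhdsWithin 0 (Ioi 0))
        (nhds (chiSqPDF k x)) := by
      rw [NCChiAux.chiSq_eq k hk hx0]
      exact hlim0.congr' heq
    have hchi : 0 < chiSqPDF k x := by
      rw [NCChiAux.chiSq_eq k hk hx0]
      exact mul_pos (mul_pos (mul_pos one_half_pos (Real.exp_pos _))
        (Real.rpow_pos_of_pos (by linarith) _)) (one_div_pos.2 hΓ)
    have hcont : ContinuousAt (fun t : ℝ => t * Real.log t) (chiSqPDF k x) :=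
      continuousAt_id.mul (Real.continuousAt_log hchi.ne')
    exact hcont.tendsto.comp hf
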